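/- Let 0 < m ≤ M be real numbers. There is a continuous function σ : [0, π) → [0, ∞) with σ(0) = 0 such that: whenever x, y, z are points in the Euclidean plane forming an isosceles triangle with d(x,y) = d(x,z), and x', y', z' are points in the Euclidean plane such that the ratios d(x,y)/d(x',y'), d(x,z)/d(x',z'), and d(y,z)/d(y',z') all lie in [m, M], then the angle at x' in the triangle x'y'z' satisfies ∠x'(y',z') ≤ σ(∠x(y,z)). -/

import Mathlib

open Real EuclideanGeometry

lemma arccos_antitone : Antitone Real.arccos := fun _ _ h => by
  simp only [Real.arccos]
  linarith [Real.monotone_arcsin h]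

lemma key_ineq (m M a b p q r c c' : ℝ) (hm : 0 < m) (hM : 0 < M)
    (ha : 0 < a) (hp : 0 < p) (hq : 0 < q) (hr : 0 < r) (hb0 : 0 < b)
    (hlaw1 : b * b = a * a + a * a - 2 * a * a * c)
    (hlaw2 : r * r = p * p + q * q - 2 * p * q * c')
    (haMp : a ≤ M * p) (haMq : a ≤ M * q) (hmrb : m * r ≤ b) :
    1 - (M / m) ^ 2 * (1 - c) ≤ c' := by
  have h1' : a * a ≤ (M * p) * (M * q) :=
    mul_le_mul haMp haMq ha.le (mul_pos hM hp).le
  have h2' : (m * r) * (m * r) ≤ b * b :=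
    mul_le_mul hmrb hmrb (mul_pos hm hr).le hb0.le
  have h3' : (a * a) * (b * b) ≤ ((M * p) * (M * q)) * (b * b) :=
    mul_le_mul_of_nonneg_right h1' (mul_self_nonneg b)
  have h4' : (a * a) * ((m * r) * (m * r)) ≤ (a * a) * (b * b) :=
    mul_le_mul_of_nonneg_left h2' (mul_self_nonneg a)
  have hlaw2' : (r * r) * (m * m * (a * a))
      = (p * p + q * q - 2 * p * q * c') * (m * m * (a * a)) := by rw [hlaw2]
  have hmain : (1 - c') * (2 * p * q) * (m * m) * (a * a)
      ≤ (M * M) * (b * b) * (p * q) := by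
    nlinarith [hlaw2', h3', h4', mul_nonneg (mul_nonneg (mul_self_nonneg m)
      (mul_self_nonneg a)) (mul_self_nonneg (p - q))]
  rw [hlaw1] at hmain
  have h6' : (1 - c') * (m * m) ≤ (M * M) * (1 - c) := by
    nlinarith [hmain, mul_pos (mul_pos hp hq) (mul_pos ha ha)]
  have hdiv : (M / m) ^ 2 * (1 - c) = M * M * (1 - c) / (m * m) := by
    field_simp
  have h7 : 1 - c' ≤ M * M * (1 - c) / (m * m) :=
    (le_div_iff₀ (by positivity)).mpr (by linarith [h6'])
  rw [hdiv]; linarith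

/-- Given `0 < m ≤ M`, there is a continuous function `σ : [0,π) → [0,∞)`
with `σ(0) = 0` such that whenever `x y z` form an isosceles triangle in the Euclidean plane
with `d(x,y) = d(x,z)`, and `x' y' z'` are points whose side-length ratios with `x y z`
(as listed) all lie in `[m, M]`, then `∠x'(y',z') ≤ σ(∠x(y,z))`. -/
theorem exists_angle_comparison_function (m M : ℝ) (hm : 0 < m) (hmM : m ≤ M) :
    ∃ σ : ℝ → ℝ, ContinuousOn σ (Set.Ico 0 π) ∧ σ 0 = 0 ∧
      (∀ θ ∈ Set.Ico (0:ℝ) π, 0 ≤ σ θ) ∧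
      ∀ x y z x' y' z' : EuclideanSpace ℝ (Fin 2),
        x ≠ y → x ≠ z → y ≠ z → x' ≠ y' → x' ≠ z' → y' ≠ z' →
        dist x y = dist x z →
        EuclideanGeometry.angle y x z < π →
        m ≤ dist x y / dist x' y' → dist x y / dist x' y' ≤ M →
        m ≤ dist x z / dist x' z' → dist x z / dist x' z' ≤ M →
        m ≤ dist y z / dist y' z' → dist y z / dist y' z' ≤ M →
        EuclideanGeometry.angle y' x' z' ≤ σ (EuclideanGeometry.angle y x z) := by
  refine ⟨fun θ => Real.arccos (1 - (M / m) ^ 2 * (1 - Real.cos θ)), ?_, ?_, ?_, ?_⟩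
  · exact (Real.continuous_arccos.comp (by continuity)).continuousOn
  · simp [Real.arccos_one]
  · intro θ _; exact Real.arccos_nonneg _
  · intro x y z x' y' z' hxy hxz hyz hxy' hxz' hyz' hiso _ h1 h2 h3 h4 h5 h6
    set a : ℝ := dist x y with ha_def
    set p : ℝ := dist x' y' with hp_def
    set q : ℝ := dist x' z' with hq_def
    set b : ℝ := dist y z with hb_def
    set r : ℝ := dist y' z' with hr_def
    set c : ℝ := Real.cos (EuclideanGeometry.angle y x z) with hc_def
    set c' : ℝ := Real.cos (EuclideanGeometry.angle y' x' z') with hc'_def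
    have ha : 0 < a := dist_pos.mpr hxy
    have hp : 0 < p := dist_pos.mpr hxy'
    have hq : 0 < q := dist_pos.mpr hxz'
    have hr : 0 < r := dist_pos.mpr hyz'
    have hb0 : 0 < b := dist_pos.mpr hyz
    -- law of cosines
    have hlaw1 : b * b = a * a + a * a - 2 * a * a * c := by
      have := EuclideanGeometry.law_cos y x z
      rw [dist_comm y x, dist_comm z x, ← hiso] at this
      simpa using this
    have hlaw2 : r * r = p * p + q * q - 2 * p * q * c' := by
      have := EuclideanGeometry.law_cos y' x' z'
      rw [dist_comm y' x', dist_comm z' x'] at this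
      simpa using this
    -- ratio bounds
    have hM : 0 < M := lt_of_lt_of_le hm hmM
    have haMp : a ≤ M * p := by rw [div_le_iff₀ hp] at h2; exact h2
    have haMq : a ≤ M * q := by rw [← hiso, div_le_iff₀ hq] at h4; exact h4
    have hmrb : m * r ≤ b := by rw [le_div_iff₀ hr] at h5; linarith
    have hcc : 1 - (M / m) ^ 2 * (1 - c) ≤ c' :=
      key_ineq m M a b p q r c c' hm hM ha hp hq hr hb0 hlaw1 hlaw2 haMp haMq hmrb
    calc EuclideanGeometry.angle y' x' z'
        = Real.arccos c' := (Real.arccos_cos (EuclideanGeometry.angle_nonneg _ _ _)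
          (EuclideanGeometry.angle_le_pi _ _ _)).symm
      _ ≤ Real.arccos (1 - (M / m) ^ 2 * (1 - c)) := arccos_antitone hcc
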